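/- For all integers m, s ≥ 1, the formal power series Σ_{k≥0} q^k (1 − q^k)/((q^s; q^m)_k) has non-negative coefficients, where (t; q^m)_k = ∏_{0≤j<k} (1 − t q^{mj}). -/

import Mathlib

open PowerSeries

namespace ChernBinnerAux

/-- The geometric series `Σ_{e ∣ n} q^n = (1 - q^e)⁻¹`. -/
noncomputable def geom (e : ℕ) : PowerSeries ℝ :=
  PowerSeries.mk fun n => if e ∣ n then 1 else 0

lemma geom_mul (e : ℕ) (he : 1 ≤ e) : geom e * (1 - X ^ e) = 1 := by
  ext n
  rw [mul_sub, mul_one, map_sub, coeff_mul_X_pow']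
  rcases Nat.eq_zero_or_pos n with hn | hn
  · subst hn
    rw [geom, coeff_mk, if_pos (dvd_zero e), if_neg (by omega : ¬ e ≤ 0), sub_zero]
    simp [coeff_one]
  · have hn1 : coeff (R := ℝ) n (1 : PowerSeries ℝ) = 0 := by
      simp [coeff_one, hn.ne']
    rw [hn1, geom, coeff_mk, coeff_mk]
    by_cases hle : e ≤ n
    · rw [if_pos hle]
      have : e ∣ n ↔ e ∣ n - e := by
        constructor
        · intro h; exact Nat.dvd_sub h dvd_rfl
        · intro h
          have := Nat.dvd_add h (dvd_refl e)
          rwa [Nat.sub_add_cancel hle] at this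
      by_cases hd : e ∣ n
      · rw [if_pos hd, if_pos (this.mp hd)]; ring
      · rw [if_neg hd, if_neg (fun h => hd (this.mpr h))]; ring
    · rw [if_neg hle]
      have hd : ¬ e ∣ n := fun h => hle (Nat.le_of_dvd hn h)
      rw [if_neg hd]; ring

lemma coeff_geom_nonneg (e n : ℕ) : 0 ≤ coeff (R := ℝ) n (geom e) := by
  rw [geom, coeff_mk]; split <;> norm_num

lemma constantCoeff_geom (e : ℕ) : constantCoeff (R := ℝ) (geom e) = 1 := by
  rw [← coeff_zero_eq_constantCoeff, geom, coeff_mk, if_pos (dvd_zero e)]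

lemma constantCoeff_one_sub_X_pow (e : ℕ) (he : 1 ≤ e) :
    constantCoeff (R := ℝ) (1 - (X : PowerSeries ℝ) ^ e) = 1 := by
  rw [map_sub, map_one, map_pow, constantCoeff_X, zero_pow (by omega), sub_zero]

/-- Inverse of a finite product of `1 - X^(e j)` is a product of geometric series. -/
lemma inv_prod_eq (t : Finset ℕ) (e : ℕ → ℕ) (he : ∀ j, 1 ≤ e j) :
    (∏ j ∈ t, (1 - (X : PowerSeries ℝ) ^ (e j)))⁻¹ = ∏ j ∈ t, geom (e j) := by
  have hc : constantCoeff (R := ℝ) (∏ j ∈ t, (1 - (X : PowerSeries ℝ) ^ (e j))) ≠ 0 := by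
    rw [map_prod]
    rw [Finset.prod_eq_one fun j _ => constantCoeff_one_sub_X_pow (e j) (he j)]
    norm_num
  rw [PowerSeries.inv_eq_iff_mul_eq_one hc, ← Finset.prod_mul_distrib]
  exact Finset.prod_eq_one fun j _ => geom_mul (e j) (he j)

lemma coeff_prod_geom_nonneg (t : Finset ℕ) (e : ℕ → ℕ) (n : ℕ) :
    0 ≤ coeff (R := ℝ) n (∏ j ∈ t, geom (e j)) := by
  classical
  induction t using Finset.induction_on generalizing n with
  | empty => simp [coeff_one]; split <;> norm_num
  | insert a t hx ih =>
      rw [Finset.prod_insert hx, coeff_mul]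
      refine Finset.sum_nonneg fun p _ => mul_nonneg (coeff_geom_nonneg _ _) (ih _)

lemma constantCoeff_prod_geom (t : Finset ℕ) (e : ℕ → ℕ) :
    coeff (R := ℝ) 0 (∏ j ∈ t, geom (e j)) = 1 := by
  rw [coeff_zero_eq_constantCoeff, map_prod]
  exact Finset.prod_eq_one fun j _ => constantCoeff_geom (e j)

/-- If `g` has nonneg coefficients and constant coefficient `1`, multiplying by `g`
can only increase the coefficients of a series with nonneg coefficients. -/
lemma coeff_le_coeff_mul (f g : PowerSeries ℝ) (hf : ∀ n, 0 ≤ coeff (R := ℝ) n f)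
    (hg : ∀ n, 0 ≤ coeff (R := ℝ) n g) (hg0 : coeff (R := ℝ) 0 g = 1) (n : ℕ) :
    coeff (R := ℝ) n f ≤ coeff (R := ℝ) n (f * g) := by
  rw [coeff_mul]
  have hmem : (n, 0) ∈ Finset.HasAntidiagonal.antidiagonal n := by simp
  have := Finset.single_le_sum
    (f := fun p : ℕ × ℕ => coeff (R := ℝ) p.1 f * coeff (R := ℝ) p.2 g)
    (fun p _ => mul_nonneg (hf p.1) (hg p.2)) hmem
  simpa [hg0] using this

end ChernBinnerAux

open ChernBinnerAux in
/-- For all integers `m, s ≥ 1`, the formal power series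
`Σ_{k≥0} q^k (1 − q^k)/((q^s; q^m)_k)`, where
`(t; q^m)_k = ∏_{0≤j<k}(1 − t q^{mj})`, has non-negative coefficients.
The `k`-th summand has order at least `k`, so the coefficient of `q^N` of the
infinite sum is captured faithfully by the finite sum over `k ≤ N` below. -/
theorem chern_binner_positivity (m s : ℕ) (hm : 1 ≤ m) (hs : 1 ≤ s) (N : ℕ) :
    0 ≤ coeff (R := ℝ) N (∑ k ∈ Finset.range (N + 1),
      X ^ k * (1 - X ^ k) *
        (∏ j ∈ Finset.range k, (1 - (X : PowerSeries ℝ) ^ (s + m * j)))⁻¹) := by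
  classical
  set e : ℕ → ℕ := fun j => s + m * j with he_def
  have he : ∀ j, 1 ≤ e j := fun j => by simp [he_def]; omega
  -- the inverse Pochhammer products
  set u : ℕ → PowerSeries ℝ := fun k => ∏ j ∈ Finset.range k, geom (e j) with hu_def
  have hinv : ∀ k : ℕ,
      (∏ j ∈ Finset.range k, (1 - (X : PowerSeries ℝ) ^ (e j)))⁻¹ = u k :=
    fun k => inv_prod_eq _ e he
  have hu_nonneg : ∀ k n, 0 ≤ coeff (R := ℝ) n (u k) := fun k n =>
    coeff_prod_geom_nonneg _ e n
  have hu_zero : ∀ k, coeff (R := ℝ) 0 (u k) = 1 := fun k => constantCoeff_prod_geom _ e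
  -- the two families of coefficients
  set a : ℕ → ℝ := fun k => coeff (R := ℝ) N (X ^ k * u k) with ha_def
  set b : ℕ → ℝ := fun k => coeff (R := ℝ) N (X ^ (2 * k) * u k) with hb_def
  have ha_eq : ∀ k, a k = if k ≤ N then coeff (R := ℝ) (N - k) (u k) else 0 := fun k => by
    rw [ha_def]; exact coeff_X_pow_mul' (u k) k N
  have hb_eq : ∀ k, b k = if 2 * k ≤ N then coeff (R := ℝ) (N - 2 * k) (u k) else 0 := fun k => by
    rw [hb_def]; exact coeff_X_pow_mul' (u k) (2 * k) N
  have ha_nonneg : ∀ k, 0 ≤ a k := fun k => by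
    rw [ha_eq]; split
    · exact hu_nonneg _ _
    · exact le_refl 0
  -- b k ≤ a (2 k)
  have hba : ∀ k, b k ≤ a (2 * k) := by
    intro k
    rw [ha_eq, hb_eq]
    by_cases h : 2 * k ≤ N
    · rw [if_pos h, if_pos h]
      have hsplit : u (2 * k) = u k * ∏ j ∈ Finset.range k, geom (e (k + j)) := by
        rw [hu_def]
        simp only []
        rw [two_mul, Finset.prod_range_add]
      rw [hsplit]
      exact coeff_le_coeff_mul _ _ (hu_nonneg k) (coeff_prod_geom_nonneg _ _)
        (constantCoeff_prod_geom _ _) _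
    · rw [if_neg h, if_neg h]
  -- rewrite the main sum
  have hterm : ∀ k, X ^ k * (1 - X ^ k) *
      (∏ j ∈ Finset.range k, (1 - (X : PowerSeries ℝ) ^ (s + m * j)))⁻¹
      = X ^ k * u k - X ^ (2 * k) * u k := by
    intro k
    have : (∏ j ∈ Finset.range k, (1 - (X : PowerSeries ℝ) ^ (s + m * j)))⁻¹ = u k := hinv k
    rw [this, two_mul, pow_add]
    ring
  have hcoeff : coeff (R := ℝ) N (∑ k ∈ Finset.range (N + 1),
      X ^ k * (1 - X ^ k) *
        (∏ j ∈ Finset.range k, (1 - (X : PowerSeries ℝ) ^ (s + m * j)))⁻¹)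
      = ∑ k ∈ Finset.range (N + 1), (a k - b k) := by
    rw [map_sum]
    refine Finset.sum_congr rfl fun k _ => ?_
    rw [hterm k, map_sub]
  rw [hcoeff, Finset.sum_sub_distrib, sub_nonneg]
  -- injection k ↦ 2k
  have ha_vanish : ∀ j, N < j → a j = 0 := fun j hj => by
    rw [ha_eq, if_neg (by omega)]
  calc ∑ k ∈ Finset.range (N + 1), b k
      ≤ ∑ k ∈ Finset.range (N + 1), a (2 * k) :=
        Finset.sum_le_sum fun k _ => hba k
    _ = ∑ j ∈ (Finset.range (N + 1)).image (fun k => 2 * k), a j := by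
        rw [Finset.sum_image (fun x _ y _ h => by omega)]
    _ = ∑ j ∈ ((Finset.range (N + 1)).image (fun k => 2 * k)).filter (· ≤ N), a j := by
        refine (Finset.sum_subset (Finset.filter_subset _ _) fun x hx hnx => ?_).symm
        have : ¬ x ≤ N := by
          intro h; exact hnx (Finset.mem_filter.mpr ⟨hx, h⟩)
        exact ha_vanish x (by omega)
    _ ≤ ∑ j ∈ Finset.range (N + 1), a j := by
        refine Finset.sum_le_sum_of_subset_of_nonneg ?_ fun j _ _ => ha_nonneg j
        intro x hx
        rw [Finset.mem_filter] at hx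
        exact Finset.mem_range.mpr (by omega)
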